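/- For a prime r > 7, the quantity binomial(d₂, 2) − d₃ equals (r+5)(r+3)(r+1)r(r-1)(r-8)/5760 and is positive, where d₂ = Σ_{j=1}^{(r-1)/2} α_j and d₃ = Σ_{j=1}^{(r-1)/2} α_j², with α_j = (r/4)csc²(2πj/r). In particular d₃ < binomial(d₂, 2) for primes r > 7. -/

import Mathlib

open Real

/-- The Verlinde weights `α_j = (r/4)·csc²(2πj/r)`. -/
noncomputable def tqftAlpha (r j : ℕ) : ℝ := r / (4 * Real.sin (2 * Real.pi * j / r) ^ 2)

open Finset

lemma sum_Icc_one {M : Type*} [AddCommMonoid M] (f : ℕ → M) (n : ℕ) :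
    ∑ k ∈ Icc 1 n, f k = ∑ i ∈ range n, f (i + 1) := by
  induction n with
  | zero => simp
  | succ n ih => rw [Finset.sum_Icc_succ_top (by omega), ih, Finset.sum_range_succ]

lemma sum_range_two_mul {M : Type*} [AddCommMonoid M] (f : ℕ → M) (m : ℕ) :
    ∑ k ∈ range (2 * m), f k = ∑ j ∈ range m, (f (2 * j) + f (2 * j + 1)) := by
  induction m with
  | zero => simp
  | succ m ih =>
      have h2 : 2 * (m + 1) = (2 * m + 1) + 1 := by ring
      rw [h2, Finset.sum_range_succ, Finset.sum_range_succ, ih, Finset.sum_range_succ]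
      rw [add_assoc]

-- Gauss-type sums over ℂ
lemma sumA1 (M : ℕ) : ∑ a ∈ range M, (a : ℂ) = M * (M - 1) / 2 := by
  induction M with
  | zero => simp
  | succ M ih => rw [Finset.sum_range_succ, ih]; push_cast; ring

lemma sumA2 (M : ℕ) : ∑ a ∈ range M, (a : ℂ) ^ 2 = M * (M - 1) * (2 * M - 1) / 6 := by
  induction M with
  | zero => simp
  | succ M ih => rw [Finset.sum_range_succ, ih]; push_cast; ring

lemma sumV11 (N M : ℕ) : ∑ a ∈ range M, (a : ℂ) * ((N : ℂ) - a)
    = N * (M * (M - 1) / 2) - M * (M - 1) * (2 * M - 1) / 6 := by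
  induction M with
  | zero => simp
  | succ M ih => rw [Finset.sum_range_succ, ih]; push_cast; ring

lemma sumV12 (N M : ℕ) : ∑ a ∈ range M, (a : ℂ) * ((N : ℂ) - a) ^ 2
    = N ^ 2 * (M * (M - 1) / 2) - 2 * N * (M * (M - 1) * (2 * M - 1) / 6)
      + M ^ 2 * (M - 1) ^ 2 / 4 := by
  induction M with
  | zero => simp
  | succ M ih => rw [Finset.sum_range_succ, ih]; push_cast; ring

lemma sumV22 (N M : ℕ) : ∑ a ∈ range M, (a : ℂ) ^ 2 * ((N : ℂ) - a) ^ 2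
    = N ^ 2 * (M * (M - 1) * (2 * M - 1) / 6) - 2 * N * (M ^ 2 * (M - 1) ^ 2 / 4)
      + M * (M - 1) * (2 * M - 1) * (3 * M ^ 2 - 3 * M - 1) / 30 := by
  induction M with
  | zero => simp
  | succ M ih => rw [Finset.sum_range_succ, ih]; push_cast; ring

lemma sum_mul_geom1 (z : ℂ) (m : ℕ) :
    (1 - z) * ∑ a ∈ range m, (a : ℂ) * z ^ a
      = (∑ a ∈ range m, z ^ a) - 1 - ((m : ℂ) - 1) * z ^ m := by
  induction m with
  | zero => simp
  | succ m ih =>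
      rw [Finset.sum_range_succ, Finset.sum_range_succ]
      push_cast
      ring_nf
      ring_nf at ih
      linear_combination ih

lemma sum_mul_geom2 (z : ℂ) (m : ℕ) :
    (1 - z) * ∑ a ∈ range m, (a : ℂ) ^ 2 * z ^ a
      = 2 * (∑ a ∈ range m, (a : ℂ) * z ^ a) - (∑ a ∈ range m, z ^ a) + 1
        - ((m : ℂ) - 1) ^ 2 * z ^ m := by
  induction m with
  | zero => simp
  | succ m ih =>
      rw [Finset.sum_range_succ, Finset.sum_range_succ, Finset.sum_range_succ]
      push_cast
      ring_nf
      ring_nf at ih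
      linear_combination ih

lemma nat_dvd_char {r a b : ℕ} (ha0 : 0 < a) (ha : a < r) (hb : b < r) :
    r ∣ (a + b) ↔ b = r - a := by
  constructor
  · rintro ⟨c, hc⟩
    have hc2 : c < 2 := by
      by_contra h
      push_neg at h
      have : r * 2 ≤ r * c := Nat.mul_le_mul_left r h
      omega
    interval_cases c <;> omega
  · rintro rfl
    exact ⟨1, by omega⟩

lemma geomIcc {r : ℕ} (hr : 2 ≤ r) {ζ : ℂ} (hζ : IsPrimitiveRoot ζ r) (s : ℕ) :
    ∑ k ∈ Icc 1 (r - 1), (ζ ^ s) ^ k = if r ∣ s then ((r : ℂ) - 1) else -1 := by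
  by_cases h : r ∣ s
  · rw [if_pos h, (hζ.pow_eq_one_iff_dvd s).mpr h]
    simp [Nat.card_Icc]
    push_cast [Nat.cast_sub (by omega : 1 ≤ r)]
    ring
  · rw [if_neg h]
    have hx : ζ ^ s ≠ 1 := fun hc => h ((hζ.pow_eq_one_iff_dvd s).mp hc)
    have hIco : Icc 1 (r - 1) = Ico 1 r := by
      rw [← Finset.Ico_add_one_right_eq_Icc]; congr 1; omega
    rw [hIco, Finset.sum_Ico_eq_sub _ (by omega : 1 ≤ r), geom_sum_eq hx r]
    have hxr : (ζ ^ s) ^ r = 1 := by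
      rw [← pow_mul, mul_comm, pow_mul, hζ.pow_eq_one, one_pow]
    rw [hxr]
    simp

lemma conv_single {r : ℕ} (hr : 2 ≤ r) {ζ : ℂ} (hζ : IsPrimitiveRoot ζ r) :
    ∑ k ∈ Icc 1 (r - 1), ∑ a ∈ range r, (a : ℂ) ^ 1 * (ζ ^ k) ^ a
      = -(∑ a ∈ range r, (a : ℂ)) := by
  rw [Finset.sum_comm]
  have h1 : ∀ a ∈ range r, ∑ k ∈ Icc 1 (r - 1), (a : ℂ) ^ 1 * (ζ ^ k) ^ a = -(a : ℂ) := by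
    intro a ha
    rw [mem_range] at ha
    have hcomm : ∀ k, (ζ ^ k) ^ a = (ζ ^ a) ^ k := fun k => pow_right_comm ζ k a
    simp only [hcomm]
    rw [← Finset.mul_sum, geomIcc hr hζ a]
    rcases Nat.eq_zero_or_pos a with rfl | ha0
    · simp
    · rw [if_neg (fun hd => absurd (Nat.le_of_dvd ha0 hd) (by omega))]
      ring
  rw [Finset.sum_congr rfl h1, Finset.sum_neg_distrib]

lemma conv_sum {r : ℕ} (hr : 2 ≤ r) {ζ : ℂ} (hζ : IsPrimitiveRoot ζ r) (e f : ℕ)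
    (he : e ≠ 0) :
    ∑ k ∈ Icc 1 (r - 1),
        (∑ a ∈ range r, (a : ℂ) ^ e * (ζ ^ k) ^ a) * (∑ b ∈ range r, (b : ℂ) ^ f * (ζ ^ k) ^ b)
      = (r : ℂ) * (∑ a ∈ range r, (a : ℂ) ^ e * ((r : ℂ) - a) ^ f)
        - (∑ a ∈ range r, (a : ℂ) ^ e) * (∑ b ∈ range r, (b : ℂ) ^ f) := by
  have step0 : ∀ k, (∑ a ∈ range r, (a : ℂ) ^ e * (ζ ^ k) ^ a) * (∑ b ∈ range r, (b : ℂ) ^ f * (ζ ^ k) ^ b)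
      = ∑ a ∈ range r, ∑ b ∈ range r, (a : ℂ) ^ e * (b : ℂ) ^ f * (ζ ^ (a + b)) ^ k := by
    intro k
    rw [Finset.sum_mul_sum]
    apply sum_congr rfl; intro a _
    apply sum_congr rfl; intro b _
    have hpow : (ζ ^ k) ^ a * (ζ ^ k) ^ b = (ζ ^ (a + b)) ^ k := by
      rw [← pow_add, ← pow_mul, mul_comm, pow_mul]
    rw [← hpow]; ring
  have step1 : ∑ k ∈ Icc 1 (r - 1),
      (∑ a ∈ range r, (a : ℂ) ^ e * (ζ ^ k) ^ a) * (∑ b ∈ range r, (b : ℂ) ^ f * (ζ ^ k) ^ b)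
      = ∑ a ∈ range r, ∑ b ∈ range r, ∑ k ∈ Icc 1 (r - 1),
          (a : ℂ) ^ e * (b : ℂ) ^ f * (ζ ^ (a + b)) ^ k := by
    rw [Finset.sum_congr rfl fun k _ => step0 k, Finset.sum_comm]
    exact sum_congr rfl fun a _ => Finset.sum_comm
  rw [step1]
  have step2 : ∀ a ∈ range r, ∀ b ∈ range r, ∑ k ∈ Icc 1 (r - 1),
      (a : ℂ) ^ e * (b : ℂ) ^ f * (ζ ^ (a + b)) ^ k
      = (a : ℂ) ^ e * (b : ℂ) ^ f * (if r ∣ (a + b) then ((r : ℂ) - 1) else -1) := by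
    intro a _ b _
    rw [← Finset.mul_sum, geomIcc hr hζ (a + b)]
  rw [Finset.sum_congr rfl fun a ha => Finset.sum_congr rfl (step2 a ha)]
  have step3 : ∀ a ∈ range r, ∑ b ∈ range r,
      (a : ℂ) ^ e * (b : ℂ) ^ f * (if r ∣ (a + b) then ((r : ℂ) - 1) else -1)
      = (r : ℂ) * ((a : ℂ) ^ e * ((r : ℂ) - a) ^ f) - (a : ℂ) ^ e * ∑ b ∈ range r, (b : ℂ) ^ f := by
    intro a ha
    rw [mem_range] at ha
    rcases Nat.eq_zero_or_pos a with rfl | ha0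
    · simp [zero_pow he]
    · have h2 : ∀ b ∈ range r, (a : ℂ) ^ e * (b : ℂ) ^ f * (if r ∣ (a + b) then ((r : ℂ) - 1) else -1)
          = (r : ℂ) * (if b = r - a then (a : ℂ) ^ e * ((r : ℂ) - a) ^ f else 0)
            - (a : ℂ) ^ e * (b : ℂ) ^ f := by
        intro b hb
        rw [mem_range] at hb
        by_cases hd : r ∣ (a + b)
        · have hb' : b = r - a := (nat_dvd_char ha0 ha hb).mp hd
          rw [if_pos hd, if_pos hb']
          subst hb'
          rw [Nat.cast_sub (le_of_lt ha)]
          ring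
        · have hb' : b ≠ r - a := fun hc => hd ((nat_dvd_char ha0 ha hb).mpr hc)
          rw [if_neg hd, if_neg hb']
          ring
      rw [Finset.sum_congr rfl h2, Finset.sum_sub_distrib, ← Finset.mul_sum, ← Finset.mul_sum,
          Finset.sum_ite_eq' (range r) (r - a)]
      rw [if_pos (mem_range.mpr (by omega))]
  rw [Finset.sum_congr rfl step3, Finset.sum_sub_distrib, ← Finset.mul_sum, ← Finset.sum_mul]

lemma Wvals {r : ℕ} (hr : 2 ≤ r) {ζ : ℂ} (hζ : IsPrimitiveRoot ζ r) :
    (∑ k ∈ Icc 1 (r - 1), (1 - ζ ^ k)⁻¹ = ((r : ℂ) - 1) / 2)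
    ∧ (∑ k ∈ Icc 1 (r - 1), ((1 - ζ ^ k)⁻¹) ^ 2 = ((r : ℂ) - 1) * (5 - r) / 12)
    ∧ (∑ k ∈ Icc 1 (r - 1), ((1 - ζ ^ k)⁻¹) ^ 3 = ((r : ℂ) - 1) * (3 - r) / 8)
    ∧ (∑ k ∈ Icc 1 (r - 1), ((1 - ζ ^ k)⁻¹) ^ 4
        = ((r : ℂ) ^ 4 - 110 * r ^ 2 + 360 * r - 251) / 720) := by
  have hr0 : (r : ℂ) ≠ 0 := Nat.cast_ne_zero.mpr (by omega)
  have hne : ∀ k ∈ Icc 1 (r - 1), (1 : ℂ) - ζ ^ k ≠ 0 := by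
    intro k hk
    rw [mem_Icc] at hk
    exact sub_ne_zero.mpr
      (Ne.symm (hζ.pow_ne_one_of_pos_of_lt (by omega) (by omega)))
  have hzr : ∀ k : ℕ, (ζ ^ k) ^ r = 1 := fun k => by
    rw [← pow_mul, mul_comm, pow_mul, hζ.pow_eq_one, one_pow]
  have hgeo : ∀ k ∈ Icc 1 (r - 1), ∑ a ∈ range r, (ζ ^ k) ^ a = 0 := by
    intro k hk
    have hz1 : ζ ^ k ≠ 1 := fun hc => hne k hk (by rw [hc, sub_self])
    rw [geom_sum_eq hz1 r, hzr k, sub_self, zero_div]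
  -- values of the two basic character sums
  have hQ1 : ∀ k ∈ Icc 1 (r - 1),
      ∑ a ∈ range r, (a : ℂ) * (ζ ^ k) ^ a = -(r : ℂ) * (1 - ζ ^ k)⁻¹ := by
    intro k hk
    have h := sum_mul_geom1 (ζ ^ k) r
    rw [hgeo k hk, hzr k] at h
    have hnz := hne k hk
    field_simp
    linear_combination h
  have hQ2 : ∀ k ∈ Icc 1 (r - 1),
      ∑ a ∈ range r, (a : ℂ) ^ 2 * (ζ ^ k) ^ a
        = (1 - ζ ^ k)⁻¹ * (-2 * r * (1 - ζ ^ k)⁻¹ + (1 - ((r : ℂ) - 1) ^ 2)) := by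
    intro k hk
    have h := sum_mul_geom2 (ζ ^ k) r
    rw [hgeo k hk, hzr k, hQ1 k hk] at h
    have hnz := hne k hk
    field_simp
    field_simp at h
    linear_combination h
  -- W1
  have e1 := conv_single hr hζ
  have e1' : ∑ k ∈ Icc 1 (r - 1), ∑ a ∈ range r, (a : ℂ) ^ 1 * (ζ ^ k) ^ a
      = -(r : ℂ) * ∑ k ∈ Icc 1 (r - 1), (1 - ζ ^ k)⁻¹ := by
    rw [Finset.mul_sum]
    refine sum_congr rfl fun k hk => ?_
    simp only [pow_one]
    exact hQ1 k hk
  rw [sumA1 r] at e1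
  have hW1 : ∑ k ∈ Icc 1 (r - 1), (1 - ζ ^ k)⁻¹ = ((r : ℂ) - 1) / 2 := by
    apply mul_left_cancel₀ (neg_ne_zero.mpr hr0)
    linear_combination e1 - e1'
  -- W2
  have c11 := conv_sum hr hζ 1 1 one_ne_zero
  simp only [pow_one] at c11
  rw [sumV11 r r, sumA1 r] at c11
  have c11' : ∑ k ∈ Icc 1 (r - 1),
      (∑ a ∈ range r, (a : ℂ) * (ζ ^ k) ^ a) * (∑ b ∈ range r, (b : ℂ) * (ζ ^ k) ^ b)
      = (r : ℂ) ^ 2 * ∑ k ∈ Icc 1 (r - 1), ((1 - ζ ^ k)⁻¹) ^ 2 := by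
    rw [Finset.mul_sum]
    refine sum_congr rfl fun k hk => ?_
    rw [hQ1 k hk]
    ring
  have hW2 : ∑ k ∈ Icc 1 (r - 1), ((1 - ζ ^ k)⁻¹) ^ 2 = ((r : ℂ) - 1) * (5 - r) / 12 := by
    apply mul_left_cancel₀ (pow_ne_zero 2 hr0)
    linear_combination c11 - c11'
  -- W3
  have c12 := conv_sum hr hζ 1 2 one_ne_zero
  simp only [pow_one] at c12
  rw [sumV12 r r, sumA1 r, sumA2 r] at c12
  have c12' : ∑ k ∈ Icc 1 (r - 1),
      (∑ a ∈ range r, (a : ℂ) * (ζ ^ k) ^ a) * (∑ b ∈ range r, (b : ℂ) ^ 2 * (ζ ^ k) ^ b)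
      = 2 * (r : ℂ) ^ 2 * (∑ k ∈ Icc 1 (r - 1), ((1 - ζ ^ k)⁻¹) ^ 3)
        - (1 - ((r : ℂ) - 1) ^ 2) * r * (∑ k ∈ Icc 1 (r - 1), ((1 - ζ ^ k)⁻¹) ^ 2) := by
    rw [Finset.mul_sum, Finset.mul_sum, ← Finset.sum_sub_distrib]
    refine sum_congr rfl fun k hk => ?_
    rw [hQ1 k hk, hQ2 k hk]
    ring
  have hW3 : ∑ k ∈ Icc 1 (r - 1), ((1 - ζ ^ k)⁻¹) ^ 3 = ((r : ℂ) - 1) * (3 - r) / 8 := by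
    apply mul_left_cancel₀ (mul_ne_zero two_ne_zero (pow_ne_zero 2 hr0) :
      (2 : ℂ) * (r : ℂ) ^ 2 ≠ 0)
    linear_combination c12 - c12' + (1 - ((r : ℂ) - 1) ^ 2) * r * hW2
  -- W4
  have c22 := conv_sum hr hζ 2 2 two_ne_zero
  rw [sumV22 r r, sumA2 r] at c22
  have c22' : ∑ k ∈ Icc 1 (r - 1),
      (∑ a ∈ range r, (a : ℂ) ^ 2 * (ζ ^ k) ^ a) * (∑ b ∈ range r, (b : ℂ) ^ 2 * (ζ ^ k) ^ b)
      = 4 * (r : ℂ) ^ 2 * (∑ k ∈ Icc 1 (r - 1), ((1 - ζ ^ k)⁻¹) ^ 4)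
        - 4 * (r : ℂ) * (1 - ((r : ℂ) - 1) ^ 2) * (∑ k ∈ Icc 1 (r - 1), ((1 - ζ ^ k)⁻¹) ^ 3)
        + (1 - ((r : ℂ) - 1) ^ 2) ^ 2 * (∑ k ∈ Icc 1 (r - 1), ((1 - ζ ^ k)⁻¹) ^ 2) := by
    rw [Finset.mul_sum, Finset.mul_sum, Finset.mul_sum, ← Finset.sum_sub_distrib,
      ← Finset.sum_add_distrib]
    refine sum_congr rfl fun k hk => ?_
    rw [hQ2 k hk]
    ring
  have hW4 : ∑ k ∈ Icc 1 (r - 1), ((1 - ζ ^ k)⁻¹) ^ 4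
      = ((r : ℂ) ^ 4 - 110 * r ^ 2 + 360 * r - 251) / 720 := by
    apply mul_left_cancel₀ (mul_ne_zero (by norm_num : (4:ℂ) ≠ 0) (pow_ne_zero 2 hr0) :
      (4 : ℂ) * (r : ℂ) ^ 2 ≠ 0)
    linear_combination c22 - c22' + 4 * (r : ℂ) * (1 - ((r : ℂ) - 1) ^ 2) * hW3
      - (1 - ((r : ℂ) - 1) ^ 2) ^ 2 * hW2
  exact ⟨hW1, hW2, hW3, hW4⟩

lemma bridge (θ : ℝ) (hs : Real.sin θ ≠ 0) :
    ((1 / (4 * Real.sin θ ^ 2) : ℝ) : ℂ)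
      = (1 - Complex.exp (2 * θ * Complex.I))⁻¹
        - ((1 - Complex.exp (2 * θ * Complex.I))⁻¹) ^ 2 := by
  have hu : Complex.exp (θ * Complex.I) ≠ 0 := Complex.exp_ne_zero _
  have h2 : Complex.exp (2 * θ * Complex.I) = Complex.exp (θ * Complex.I) ^ 2 := by
    rw [show (2 * (θ : ℂ) * Complex.I) = (2 : ℕ) * ((θ : ℂ) * Complex.I) by push_cast; ring,
      Complex.exp_nat_mul]
  have hsin : 2 * ((Real.sin θ : ℝ) : ℂ)
      = ((Complex.exp ((θ : ℂ) * Complex.I))⁻¹ - Complex.exp ((θ : ℂ) * Complex.I))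
        * Complex.I := by
    rw [Complex.ofReal_sin, Complex.two_sin, ← Complex.exp_neg, neg_mul]
  have hs' : ((Real.sin θ : ℝ) : ℂ) ≠ 0 := Complex.ofReal_ne_zero.mpr hs
  have key : 4 * ((Real.sin θ : ℝ) : ℂ) ^ 2 * Complex.exp (θ * Complex.I) ^ 2
      = -(1 - Complex.exp (θ * Complex.I) ^ 2) ^ 2 := by
    have hk : (2 * ((Real.sin θ : ℝ) : ℂ) * Complex.exp (θ * Complex.I)) ^ 2
        = (((Complex.exp ((θ : ℂ) * Complex.I))⁻¹ - Complex.exp ((θ : ℂ) * Complex.I))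
            * Complex.I * Complex.exp (θ * Complex.I)) ^ 2 := by rw [hsin]
    have h3 : (((Complex.exp ((θ : ℂ) * Complex.I))⁻¹ - Complex.exp ((θ : ℂ) * Complex.I))
            * Complex.I * Complex.exp (θ * Complex.I)) ^ 2
        = -(1 - Complex.exp (θ * Complex.I) ^ 2) ^ 2 := by
      rw [mul_pow, mul_pow, Complex.I_sq]
      field_simp
    linear_combination hk.trans h3
  have hne : (1 : ℂ) - Complex.exp (θ * Complex.I) ^ 2 ≠ 0 := by
    intro hc
    have h4 := key
    rw [hc] at h4
    simp [pow_eq_zero_iff, Complex.exp_ne_zero, ← Complex.ofReal_sin] at h4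
    exact hs h4
  rw [h2, Complex.ofReal_div, Complex.ofReal_mul, Complex.ofReal_pow, Complex.ofReal_one,
    Complex.ofReal_ofNat]
  set s : ℂ := ((Real.sin θ : ℝ) : ℂ) with hs_def
  set u : ℂ := Complex.exp ((θ : ℂ) * Complex.I) with hu_def
  field_simp
  linear_combination key

-- the basic real csc² sums
lemma csc_sums {r : ℕ} (hr : 2 ≤ r) :
    (∑ k ∈ Icc 1 (r - 1), 1 / (4 * Real.sin (π * k / r) ^ 2) = ((r : ℝ) ^ 2 - 1) / 12)
    ∧ (∑ k ∈ Icc 1 (r - 1), (1 / (4 * Real.sin (π * k / r) ^ 2)) ^ 2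
        = ((r : ℝ) ^ 2 - 1) * ((r : ℝ) ^ 2 + 11) / 720) := by
  have hr0 : (r : ℝ) ≠ 0 := Nat.cast_ne_zero.mpr (by omega)
  have hζ : IsPrimitiveRoot (Complex.exp (2 * π * Complex.I / r)) r :=
    Complex.isPrimitiveRoot_exp r (by omega)
  obtain ⟨hW1, hW2, hW3, hW4⟩ := Wvals hr hζ
  have hbr : ∀ k ∈ Icc 1 (r - 1),
      ((1 / (4 * Real.sin (π * k / r) ^ 2) : ℝ) : ℂ)
        = (1 - Complex.exp (2 * π * Complex.I / r) ^ k)⁻¹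
          - ((1 - Complex.exp (2 * π * Complex.I / r) ^ k)⁻¹) ^ 2 := by
    intro k hk
    rw [mem_Icc] at hk
    have hθpos : 0 < π * k / r := by
      apply div_pos (mul_pos pi_pos _) (by exact_mod_cast (by omega : 0 < r))
      exact_mod_cast (by omega : 0 < k)
    have hθlt : π * k / r < π := by
      rw [div_lt_iff₀ (by exact_mod_cast (by omega : 0 < r))]
      have : (k : ℝ) < r := by exact_mod_cast (by omega : k < r)
      nlinarith [pi_pos]
    have hθ : Real.sin (π * k / r) ≠ 0 :=
      ne_of_gt (Real.sin_pos_of_pos_of_lt_pi hθpos hθlt)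
    have hζk : Complex.exp (2 * π * Complex.I / r) ^ k
        = Complex.exp (2 * ((π * k / r : ℝ) : ℂ) * Complex.I) := by
      rw [← Complex.exp_nat_mul]
      congr 1
      push_cast
      field_simp
    rw [hζk]
    exact bridge _ hθ
  constructor
  · have hC : ((∑ k ∈ Icc 1 (r - 1), 1 / (4 * Real.sin (π * k / r) ^ 2) : ℝ) : ℂ)
        = ((r : ℂ) ^ 2 - 1) / 12 := by
      rw [Complex.ofReal_sum]
      rw [Finset.sum_congr rfl hbr, Finset.sum_sub_distrib, hW1, hW2]
      ring
    exact_mod_cast hC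
  · have hC : ((∑ k ∈ Icc 1 (r - 1), (1 / (4 * Real.sin (π * k / r) ^ 2)) ^ 2 : ℝ) : ℂ)
        = ((r : ℂ) ^ 2 - 1) * ((r : ℂ) ^ 2 + 11) / 720 := by
      rw [Complex.ofReal_sum]
      have hpt : ∀ k ∈ Icc 1 (r - 1),
          (((1 / (4 * Real.sin (π * k / r) ^ 2)) ^ 2 : ℝ) : ℂ)
          = ((1 - Complex.exp (2 * π * Complex.I / r) ^ k)⁻¹) ^ 2
            - 2 * ((1 - Complex.exp (2 * π * Complex.I / r) ^ k)⁻¹) ^ 3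
            + ((1 - Complex.exp (2 * π * Complex.I / r) ^ k)⁻¹) ^ 4 := by
        intro k hk
        rw [Complex.ofReal_pow, hbr k hk]
        ring
      rw [Finset.sum_congr rfl hpt, Finset.sum_add_distrib, Finset.sum_sub_distrib,
        ← Finset.mul_sum, hW2, hW3, hW4]
      ring
    exact_mod_cast hC

lemma half_sum {r m : ℕ} (hm : r = 2 * m + 1) (G : ℕ → ℝ)
    (hsym : ∀ k, 1 ≤ k → k ≤ r - 1 → G (r - k) = G k) :
    ∑ k ∈ Icc 1 (r - 1), G k = 2 * ∑ j ∈ Icc 1 m, G (2 * j) := by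
  rw [sum_Icc_one G (r - 1), show r - 1 = 2 * m by omega,
    sum_range_two_mul (fun i => G (i + 1)) m, Finset.sum_add_distrib]
  have h1 : ∑ j ∈ range m, G (2 * j + 1) = ∑ j ∈ range m, G (2 * j + 1 + 1) := by
    rw [← Finset.sum_range_reflect (fun j => G (2 * j + 1 + 1)) m]
    refine sum_congr rfl fun j hj => ?_
    rw [mem_range] at hj
    have := hsym (2 * j + 1) (by omega) (by omega)
    rw [← this]
    congr 1
    omega
  rw [h1, sum_Icc_one (fun j => G (2 * j)) m, two_mul]
  congr 1 <;> exact sum_congr rfl fun i _ => by congr 1; omega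

/-- For a prime `r > 7`, with `d₂ = Σ_j α_j` and `d₃ = Σ_j α_j²`,
`binomial(d₂,2) − d₃ = (r+5)(r+3)(r+1)r(r-1)(r-8)/5760 > 0`; in particular
`d₃ < binomial(d₂, 2)`. -/
theorem stmt_11 (r : ℕ) (hr : r.Prime) (h7 : 7 < r) :
    (∑ j ∈ Finset.Icc 1 ((r - 1) / 2), tqftAlpha r j) *
        ((∑ j ∈ Finset.Icc 1 ((r - 1) / 2), tqftAlpha r j) - 1) / 2 -
      (∑ j ∈ Finset.Icc 1 ((r - 1) / 2), tqftAlpha r j ^ 2)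
    = ((r : ℝ) + 5) * ((r : ℝ) + 3) * ((r : ℝ) + 1) * r * ((r : ℝ) - 1) * ((r : ℝ) - 8) / 5760 ∧
    (∑ j ∈ Finset.Icc 1 ((r - 1) / 2), tqftAlpha r j ^ 2) <
      (∑ j ∈ Finset.Icc 1 ((r - 1) / 2), tqftAlpha r j) *
        ((∑ j ∈ Finset.Icc 1 ((r - 1) / 2), tqftAlpha r j) - 1) / 2 := by
  have hr2 : 2 ≤ r := by omega
  have hr0 : (r : ℝ) ≠ 0 := Nat.cast_ne_zero.mpr (by omega)
  obtain ⟨m, hm⟩ : Odd r := hr.odd_of_ne_two (by omega)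
  have hm' : (r - 1) / 2 = m := by omega
  set G : ℕ → ℝ := fun k => 1 / (4 * Real.sin (π * k / r) ^ 2) with hG
  have hsym : ∀ k, 1 ≤ k → k ≤ r - 1 → G (r - k) = G k := by
    intro k hk1 hk2
    have hc : ((r - k : ℕ) : ℝ) = (r : ℝ) - k := by
      rw [Nat.cast_sub (by omega)]
    simp only [hG, hc]
    have harg : π * ((r : ℝ) - k) / r = π - π * k / r := by
      field_simp
    rw [harg, Real.sin_pi_sub]
  obtain ⟨hS1, hS2⟩ := csc_sums hr2
  have halpha : ∀ j, tqftAlpha r j = (r : ℝ) * G (2 * j) := by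
    intro j
    simp only [tqftAlpha, hG]
    rw [show 2 * π * (j : ℝ) / r = π * ((2 * j : ℕ) : ℝ) / r by push_cast; ring]
    rw [div_eq_mul_one_div]
  have hA : ∑ j ∈ Finset.Icc 1 ((r - 1) / 2), tqftAlpha r j
      = (r : ℝ) * ((r : ℝ) ^ 2 - 1) / 24 := by
    rw [hm']
    calc ∑ j ∈ Icc 1 m, tqftAlpha r j = ∑ j ∈ Icc 1 m, (r : ℝ) * G (2 * j) :=
          sum_congr rfl fun j _ => halpha j
      _ = (r : ℝ) * ∑ j ∈ Icc 1 m, G (2 * j) := by rw [Finset.mul_sum]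
      _ = (r : ℝ) * ((∑ k ∈ Icc 1 (r - 1), G k) / 2) := by
          rw [half_sum hm G hsym]; ring
      _ = (r : ℝ) * ((r : ℝ) ^ 2 - 1) / 24 := by rw [hS1]; ring
  have hB : ∑ j ∈ Finset.Icc 1 ((r - 1) / 2), tqftAlpha r j ^ 2
      = (r : ℝ) ^ 2 * ((r : ℝ) ^ 2 - 1) * ((r : ℝ) ^ 2 + 11) / 1440 := by
    rw [hm']
    have hsym2 : ∀ k, 1 ≤ k → k ≤ r - 1 → (fun k => (G k) ^ 2) (r - k) = (fun k => (G k) ^ 2) k :=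
      fun k h1 h2 => by simp only []; rw [hsym k h1 h2]
    calc ∑ j ∈ Icc 1 m, tqftAlpha r j ^ 2 = ∑ j ∈ Icc 1 m, (r : ℝ) ^ 2 * (G (2 * j)) ^ 2 :=
          sum_congr rfl fun j _ => by rw [halpha j]; ring
      _ = (r : ℝ) ^ 2 * ∑ j ∈ Icc 1 m, (G (2 * j)) ^ 2 := by rw [Finset.mul_sum]
      _ = (r : ℝ) ^ 2 * ((∑ k ∈ Icc 1 (r - 1), (G k) ^ 2) / 2) := by
          rw [half_sum hm (fun k => (G k) ^ 2) hsym2]; ring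
      _ = (r : ℝ) ^ 2 * ((r : ℝ) ^ 2 - 1) * ((r : ℝ) ^ 2 + 11) / 1440 := by rw [hS2]; ring
  rw [hA, hB]
  have h11 : (11 : ℝ) ≤ (r : ℝ) := by
    have : 11 ≤ r := by
      rcases (by omega : r = 8 ∨ r = 9 ∨ r = 10 ∨ 11 ≤ r) with rfl | rfl | rfl | h
      · norm_num at hr
      · norm_num at hr
      · norm_num at hr
      · exact h
    exact_mod_cast this
  have hEq : (r : ℝ) * ((r : ℝ) ^ 2 - 1) / 24 * ((r : ℝ) * ((r : ℝ) ^ 2 - 1) / 24 - 1) / 2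
      - (r : ℝ) ^ 2 * ((r : ℝ) ^ 2 - 1) * ((r : ℝ) ^ 2 + 11) / 1440
      = ((r : ℝ) + 5) * ((r : ℝ) + 3) * ((r : ℝ) + 1) * r * ((r : ℝ) - 1) * ((r : ℝ) - 8)
        / 5760 := by
    ring
  refine ⟨hEq, ?_⟩
  have hpos : 0 < ((r : ℝ) + 5) * ((r : ℝ) + 3) * ((r : ℝ) + 1) * r * ((r : ℝ) - 1)
      * ((r : ℝ) - 8) / 5760 := by
    apply div_pos _ (by norm_num)
    apply mul_pos
    apply mul_pos
    apply mul_pos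
    apply mul_pos
    apply mul_pos
    all_goals linarith
  linarith [hEq, hpos]
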